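/- Let A, B ∈ ℝ with A ≠ 0 and let U ⊆ ℝ be an open set on which cos(A·x/2 + B) ≠ 0. Define f : U → ℝ by f(x) = log(1 + tan(A·x/2 + B)²). Then f satisfies the third-order ODE f'·f'' − f''' = 0 on U, and f' is not identically zero. -/

import Mathlib

open Real Filter Topology

private lemma huD (A B x : ℝ) : HasDerivAt (fun x : ℝ => A * x / 2 + B) (A/2) x := by
  simpa using (((hasDerivAt_id x).const_mul A).div_const 2).add_const B

private lemma aux1 (A B x : ℝ) (hc : Real.cos (A*x/2+B) ≠ 0) :
    HasDerivAt (fun x => Real.log (1 + Real.tan (A * x / 2 + B)^2)) (A * Real.tan (A*x/2+B)) x := by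
  have htan := (Real.hasDerivAt_tan hc).comp x (huD A B x)
  have hsq := (htan.pow 2).const_add 1
  have hpos : (0:ℝ) < 1 + Real.tan (A*x/2+B)^2 := by positivity
  have hlog := hsq.log hpos.ne'
  refine hlog.congr_deriv (Eq.symm ?_)
  have hs := Real.sin_sq_add_cos_sq (A*x/2+B)
  simp only [Function.comp, Real.tan_eq_sin_div_cos, Pi.pow_apply]
  set c := Real.cos (A*x/2+B)
  set s := Real.sin (A*x/2+B)
  have h2 : 1 + (s/c)^2 = 1/c^2 := by field_simp; linarith [hs]
  rw [h2]
  field_simp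
  rw [show (2:ℕ) - 1 = 1 from rfl, pow_one, Nat.cast_ofNat]
  field_simp

private lemma aux2 (A B x : ℝ) (hc : Real.cos (A*x/2+B) ≠ 0) :
    HasDerivAt (fun x => A * Real.tan (A*x/2+B)) (A^2/2 * (1 / Real.cos (A*x/2+B)^2)) x := by
  have htan := (Real.hasDerivAt_tan hc).comp x (huD A B x)
  have h := htan.const_mul A
  simp only [Function.comp] at h
  refine h.congr_deriv (Eq.symm ?_)
  ring

private lemma aux3 (A B x : ℝ) (hc : Real.cos (A*x/2+B) ≠ 0) :
    HasDerivAt (fun x => A^2/2 * (1 / Real.cos (A*x/2+B)^2))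
      (A^3/2 * Real.sin (A*x/2+B) / Real.cos (A*x/2+B)^3) x := by
  have hcos : HasDerivAt (fun x => Real.cos (A*x/2+B)) (-Real.sin (A*x/2+B) * (A/2)) x :=
    (Real.hasDerivAt_cos _).comp x (huD A B x)
  have hinv := (hcos.pow 2).inv (pow_ne_zero 2 hc)
  have h := hinv.const_mul (A^2/2)
  simp only [one_div]
  refine h.congr_deriv (Eq.symm ?_)
  simp only [Pi.pow_apply]
  set c := Real.cos (A*x/2+B) with hcdef
  set s := Real.sin (A*x/2+B)
  field_simp
  ring

theorem stmt2 (A B : ℝ) (hA : A ≠ 0) (U : Set ℝ) (hU : IsOpen U) (hne : U.Nonempty)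
    (hcos : ∀ x ∈ U, Real.cos (A * x / 2 + B) ≠ 0) :
    (∀ x ∈ U,
      deriv (fun x => Real.log (1 + Real.tan (A * x / 2 + B)^2)) x *
        deriv (deriv (fun x => Real.log (1 + Real.tan (A * x / 2 + B)^2))) x -
        deriv (deriv (deriv (fun x => Real.log (1 + Real.tan (A * x / 2 + B)^2)))) x = 0) ∧
    ¬ (∀ x ∈ U, deriv (fun x => Real.log (1 + Real.tan (A * x / 2 + B)^2)) x = 0) := by
  set f := fun x => Real.log (1 + Real.tan (A * x / 2 + B)^2) with hf
  have hopen : IsOpen {y : ℝ | Real.cos (A*y/2+B) ≠ 0} := by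
    have : Continuous fun y : ℝ => Real.cos (A*y/2+B) := by continuity
    exact isOpen_compl_singleton.preimage this
  have hev : ∀ y : ℝ, Real.cos (A*y/2+B) ≠ 0 → ∀ᶠ z in 𝓝 y, Real.cos (A*z/2+B) ≠ 0 :=
    fun y hy => eventually_of_mem (hopen.mem_nhds hy) (fun z hz => hz)
  have d1 : ∀ y : ℝ, Real.cos (A*y/2+B) ≠ 0 → deriv f y = A * Real.tan (A*y/2+B) :=
    fun y hy => (aux1 A B y hy).deriv
  have d2 : ∀ y : ℝ, Real.cos (A*y/2+B) ≠ 0 →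
      deriv (deriv f) y = A^2/2 * (1 / Real.cos (A*y/2+B)^2) := by
    intro y hy
    have heq : deriv f =ᶠ[𝓝 y] fun z => A * Real.tan (A*z/2+B) :=
      (hev y hy).mono (fun z hz => d1 z hz)
    rw [heq.deriv_eq]
    exact (aux2 A B y hy).deriv
  have d3 : ∀ y : ℝ, Real.cos (A*y/2+B) ≠ 0 →
      deriv (deriv (deriv f)) y = A^3/2 * Real.sin (A*y/2+B) / Real.cos (A*y/2+B)^3 := by
    intro y hy
    have heq : deriv (deriv f) =ᶠ[𝓝 y] fun z => A^2/2 * (1 / Real.cos (A*z/2+B)^2) :=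
      (hev y hy).mono (fun z hz => d2 z hz)
    rw [heq.deriv_eq]
    exact (aux3 A B y hy).deriv
  constructor
  · intro x hx
    have hc := hcos x hx
    rw [d1 x hc, d2 x hc, d3 x hc, Real.tan_eq_sin_div_cos]
    field_simp
    ring
  · intro h
    obtain ⟨x₀, hx₀⟩ := hne
    have hc := hcos x₀ hx₀
    have heq : deriv f =ᶠ[𝓝 x₀] fun _ => (0:ℝ) :=
      eventually_of_mem (hU.mem_nhds hx₀) (fun z hz => h z hz)
    have h0 : deriv (deriv f) x₀ = 0 := by rw [heq.deriv_eq, deriv_const]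
    rw [d2 x₀ hc] at h0
    have : A^2/2 * (1 / Real.cos (A*x₀/2+B)^2) > 0 := by positivity
    linarith
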